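/- Let Γ = t₀ℤ ⋉_φ PℤᵐΓ be a subgroup of the semidirect product ℝ ⋉_φ ℝᵐ where φ(t₀) has finite multiplicative order d > 1 and P ∈ GL(m,ℝ). Then Σ = dt₀ℤ ⋉_φ Pℤᵐ is the maximal normal abelian subgroup of Γ, and Γ/Σ ≅ ℤ_d. -/

import Mathlib

open Matrix

/-- In `G = ℝ ⋉_φ ℝᵐ`, if `Γ = t₀ℤ ⋉_φ Pℤᵐ` where `φ(t₀)` acts by a matrix `M t₀` of
finite multiplicative order `d > 1` and `P ∈ GL(m,ℝ)`, then `Σ = dt₀ℤ ⋉_φ Pℤᵐ` is the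
maximal normal abelian subgroup of `Γ` and `Γ/Σ ≅ ℤ_d`. -/
theorem maximal_abelian_and_quotient (m : ℕ) (t₀ : ℝ) (ht₀ : t₀ ≠ 0)
    (M : ℝ → Matrix (Fin m) (Fin m) ℝ)
    (φ : Multiplicative ℝ →* MulAut (Multiplicative (Fin m → ℝ)))
    (hφ : ∀ (t : ℝ) (v : Fin m → ℝ),
      φ (Multiplicative.ofAdd t) (Multiplicative.ofAdd v)
        = Multiplicative.ofAdd ((M t).mulVec v))
    (d : ℕ) (hd : 1 < d) (hord : orderOf (M t₀) = d)
    (P : Matrix (Fin m) (Fin m) ℝ) (hP : IsUnit P)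
    (Γ S : Subgroup (SemidirectProduct (Multiplicative (Fin m → ℝ)) (Multiplicative ℝ) φ))
    (hΓ : ∀ x, x ∈ Γ ↔ ∃ (k : ℤ) (v : Fin m → ℤ),
      x.right = Multiplicative.ofAdd (t₀ * k) ∧
      x.left = Multiplicative.ofAdd (P.mulVec (fun i => (v i : ℝ))))
    (hS : ∀ x, x ∈ S ↔ ∃ (k : ℤ) (v : Fin m → ℤ),
      x.right = Multiplicative.ofAdd (t₀ * (d * k)) ∧
      x.left = Multiplicative.ofAdd (P.mulVec (fun i => (v i : ℝ)))) :
    S ≤ Γ ∧ (S.subgroupOf Γ).Normal ∧ (∀ a ∈ S, ∀ b ∈ S, a * b = b * a) ∧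
    (∀ Λ : Subgroup (SemidirectProduct (Multiplicative (Fin m → ℝ)) (Multiplicative ℝ) φ),
      Λ ≤ Γ → (Λ.subgroupOf Γ).Normal → (∀ a ∈ Λ, ∀ b ∈ Λ, a * b = b * a) → Λ ≤ S) ∧
    ∀ _ : (S.subgroupOf Γ).Normal, Nonempty ((Γ ⧸ S.subgroupOf Γ) ≃* Multiplicative (ZMod d)) := by
  classical
  have hdpos : 0 < d := Nat.lt_of_lt_of_le Nat.one_pos hd.le
  set α := φ (Multiplicative.ofAdd t₀) with hαdef
  have L1 : ∀ (n : ℕ) (v : Fin m → ℝ), (α ^ n) (Multiplicative.ofAdd v)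
      = Multiplicative.ofAdd ((M t₀ ^ n) *ᵥ v) := by
    intro n
    induction n with
    | zero => intro v; simp [Matrix.one_mulVec]
    | succ n ih =>
        intro v
        rw [pow_succ, MulAut.mul_apply, hφ, ih, Matrix.mulVec_mulVec, ← pow_succ]
  have hMd : (M t₀) ^ d = 1 := by rw [← hord]; exact pow_orderOf_eq_one _
  have matext : ∀ A B : Matrix (Fin m) (Fin m) ℝ, (∀ v : Fin m → ℝ, A *ᵥ v = B *ᵥ v) → A = B := by
    intro A B h; ext i j
    have := congrFun (h (Pi.single j 1)) i
    simpa using this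
  have hαord : orderOf α = d := by
    have h1 : α ^ d = 1 := by
      ext x
      have : x = Multiplicative.ofAdd x.toAdd := rfl
      rw [MulAut.one_apply, this, L1, hMd, Matrix.one_mulVec]
    have h2 : d ∣ orderOf α := by
      rw [← hord]
      refine orderOf_dvd_of_pow_eq_one (matext _ _ fun v => ?_)
      have h3 := (L1 (orderOf α) v).symm
      rw [pow_orderOf_eq_one, MulAut.one_apply] at h3
      rw [Matrix.one_mulVec]
      exact Multiplicative.ofAdd.injective h3
    exact Nat.dvd_antisymm (orderOf_dvd_of_pow_eq_one h1) h2
  have hφk : ∀ k : ℤ, φ (Multiplicative.ofAdd (t₀ * k)) = α ^ k := by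
    intro k
    have h : Multiplicative.ofAdd (t₀ * k) = (Multiplicative.ofAdd t₀) ^ k := by
      rw [← ofAdd_zsmul]; norm_num [zsmul_eq_mul, mul_comm]
    rw [h, map_zpow]
  have hact : ∀ (k : ℤ) (v : Fin m → ℝ), φ (Multiplicative.ofAdd (t₀ * k)) (Multiplicative.ofAdd v)
      = Multiplicative.ofAdd ((M t₀ ^ (k % d).toNat) *ᵥ v) := by
    intro k v
    have h1 : α ^ (k : ℤ) = α ^ (k % d).toNat := by
      rw [← zpow_natCast, Int.toNat_of_nonneg (Int.emod_nonneg k (by exact_mod_cast hdpos.ne'))]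
      conv_rhs => rw [← hαord]
      rw [zpow_mod_orderOf]
    rw [hφk, h1, L1]
  have htriv : ∀ k : ℤ, φ (Multiplicative.ofAdd (t₀ * ((d : ℝ) * (k : ℝ)))) = 1 := by
    intro k
    have h : (t₀ * ((d : ℝ) * (k : ℝ))) = t₀ * (((d : ℤ) * k : ℤ) : ℝ) := by push_cast; ring
    rw [h, hφk, _root_.zpow_mul, zpow_natCast, ← hαord, pow_orderOf_eq_one, _root_.one_zpow]
  have part1 : S ≤ Γ := by
    intro x hx
    obtain ⟨k, v, hk, hv⟩ := (hS x).mp hx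
    refine (hΓ x).mpr ⟨d * k, v, ?_, hv⟩
    rw [hk]; push_cast; ring_nf
  have part3 : ∀ a ∈ S, ∀ b ∈ S, a * b = b * a := by
    intro a ha b hb
    obtain ⟨ka, va, hka, hva⟩ := (hS a).mp ha
    obtain ⟨kb, vb, hkb, hvb⟩ := (hS b).mp hb
    ext : 1
    · show (a * b).left = (b * a).left
      rw [SemidirectProduct.mul_left, SemidirectProduct.mul_left, hka, hkb, htriv, htriv,
        MulAut.one_apply, MulAut.one_apply, mul_comm]
    · show (a * b).right = (b * a).right
      rw [SemidirectProduct.mul_right, SemidirectProduct.mul_right, mul_comm]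
  have hsingle : ∀ i : Fin m, (fun i' => (((Pi.single i 1 : Fin m → ℤ) i' : ℤ) : ℝ))
      = (Pi.single i (1 : ℝ)) := by
    intro i; funext i'
    simp [Pi.single_apply, apply_ite (fun z : ℤ => (z : ℝ))]
  have part4 : ∀ Λ : Subgroup (SemidirectProduct (Multiplicative (Fin m → ℝ)) (Multiplicative ℝ) φ),
      Λ ≤ Γ → (Λ.subgroupOf Γ).Normal → (∀ a ∈ Λ, ∀ b ∈ Λ, a * b = b * a) → Λ ≤ S := by
    intro Λ hΛΓ hnorm habel x hx
    obtain ⟨k, v, hk, hv⟩ := (hΓ x).mp (hΛΓ hx)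
    set j : ℕ := (k % d).toNat with hj
    set B : Matrix (Fin m) (Fin m) ℝ := (M t₀) ^ j with hB
    -- the key matrix identity
    have key : ∀ i : Fin m, ((B - 1) * (B - 1)) *ᵥ (P *ᵥ Pi.single i (1 : ℝ)) = 0 := by
      intro i
      set Gw : Fin m → ℝ := P *ᵥ Pi.single i (1 : ℝ) with hGw
      set g : SemidirectProduct (Multiplicative (Fin m → ℝ)) (Multiplicative ℝ) φ :=
        ⟨Multiplicative.ofAdd Gw, 1⟩ with hg
      have hgΓ : g ∈ Γ := by
        refine (hΓ g).mpr ⟨0, Pi.single i 1, by simp [hg], ?_⟩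
        show Multiplicative.ofAdd Gw = _
        rw [hsingle i]
      have hcΛ : g * x * g⁻¹ ∈ Λ := by
        have h1 := hnorm.conj_mem ⟨x, hΛΓ hx⟩ (by simpa [Subgroup.mem_subgroupOf] using hx) ⟨g, hgΓ⟩
        rw [Subgroup.mem_subgroupOf] at h1
        simpa using h1
      have comm := habel x hx _ hcΛ
      have hleft := congrArg SemidirectProduct.left comm
      set u : Fin m → ℝ := P *ᵥ (fun i' => (v i' : ℝ)) with hu
      have hBr : ∀ z : Multiplicative (Fin m → ℝ),
          Multiplicative.toAdd (φ x.right z) = B *ᵥ Multiplicative.toAdd z := by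
        intro z
        rw [hk]
        have := hact k z.toAdd
        rw [show Multiplicative.ofAdd z.toAdd = z from rfl] at this
        rw [this]
        rfl
      have funeq := congrArg Multiplicative.toAdd hleft
      simp only [SemidirectProduct.mul_left, SemidirectProduct.mul_right,
        SemidirectProduct.inv_left, SemidirectProduct.inv_right, toAdd_mul, toAdd_inv,
        hBr, _root_.map_mul, _root_.map_inv, one_mul, mul_one, inv_one, _root_.map_one, MulAut.one_apply,
        toAdd_ofAdd, hv, hg, toAdd_one, Matrix.mulVec_add, Matrix.mulVec_sub,
        Matrix.mulVec_neg, Matrix.mulVec_mulVec] at funeq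
      have expand : ((B - 1) * (B - 1)) = B * B - B - B + 1 := by noncomm_ring
      rw [expand, Matrix.add_mulVec, Matrix.sub_mulVec, Matrix.sub_mulVec, Matrix.one_mulVec]
      funext i'
      have h := congrFun funeq i'
      simp only [Pi.add_apply, Pi.sub_apply, Pi.neg_apply, Pi.zero_apply] at h ⊢
      linarith
    have h2 : ∀ i, (((B - 1) * (B - 1)) * P) *ᵥ Pi.single i (1 : ℝ) = 0 := by
      intro i; rw [← Matrix.mulVec_mulVec]; exact key i
    have hQP : ((B - 1) * (B - 1)) * P = 0 := by
      ext i' i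
      have h := congrFun (h2 i) i'
      simpa using h
    have hQ : ((B - 1) * (B - 1)) = 0 := by
      obtain ⟨U, hU⟩ := hP
      calc (B - 1) * (B - 1) = ((B - 1) * (B - 1)) * (P * ↑U⁻¹) := by
            rw [← hU, Units.mul_inv, mul_one]
        _ = (((B - 1) * (B - 1)) * P) * ↑U⁻¹ := by noncomm_ring
        _ = 0 := by rw [hQP, zero_mul]
    have hNB : (B - 1) * B = B - 1 := by
      have hh : (B - 1) * (B - 1) = (B - 1) * B - (B - 1) := by noncomm_ring
      rw [hh] at hQ
      exact sub_eq_zero.mp hQ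
    have keypow : ∀ n : ℕ, B ^ n = 1 + n • (B - 1) := by
      intro n; induction n with
      | zero => simp
      | succ n ih =>
          rw [pow_succ, ih, succ_nsmul]
          calc (1 + n • (B - 1)) * B = B + n • ((B - 1) * B) := by
                rw [add_mul, one_mul, smul_mul_assoc]
            _ = B + n • (B - 1) := by rw [hNB]
            _ = 1 + (n • (B - 1) + (B - 1)) := by abel
    have hBd1 : B ^ d = 1 := by rw [hB, ← pow_mul, mul_comm, pow_mul, hMd, one_pow]
    have hdN : d • (B - 1) = 0 := by
      have h := keypow d
      rw [hBd1] at h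
      exact (left_eq_add.mp h)
    have hB1 : B = 1 := by
      have hN : B - 1 = 0 := by
        ext i' i
        have h := congrFun (congrFun hdN i') i
        have h2 : (d : ℝ) * (B - 1) i' i = 0 := by
          simpa [Matrix.smul_apply, nsmul_eq_mul] using h
        rcases mul_eq_zero.mp h2 with h3 | h3
        · exact absurd h3 (by exact_mod_cast hdpos.ne')
        · simpa using h3
      exact sub_eq_zero.mp hN
    have hMj : (M t₀) ^ j = 1 := hB ▸ hB1
    have hdj : d ∣ j := hord ▸ orderOf_dvd_of_pow_eq_one hMj
    have hnn : 0 ≤ k % (d : ℤ) := Int.emod_nonneg k (by exact_mod_cast hdpos.ne')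
    have hlt : k % (d : ℤ) < d := Int.emod_lt_of_pos k (by exact_mod_cast hdpos)
    have hjlt : j < d := by omega
    have hj0 : j = 0 := Nat.eq_zero_of_dvd_of_lt hdj hjlt
    have hkmod : k % (d : ℤ) = 0 := by omega
    obtain ⟨k', hk'⟩ := Int.dvd_of_emod_eq_zero hkmod
    refine (hS x).mpr ⟨k', v, ?_, hv⟩
    rw [hk, hk']; push_cast; ring_nf
  haveI : NeZero d := ⟨hdpos.ne'⟩
  have kspec : ∀ x : Γ, ∃ (k : ℤ) (v : Fin m → ℤ),
      (x : SemidirectProduct (Multiplicative (Fin m → ℝ)) (Multiplicative ℝ) φ).right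
        = Multiplicative.ofAdd (t₀ * k) ∧
      (x : SemidirectProduct (Multiplicative (Fin m → ℝ)) (Multiplicative ℝ) φ).left
        = Multiplicative.ofAdd (P.mulVec (fun i => (v i : ℝ))) := fun x => (hΓ x).mp x.2
  set kOf : Γ → ℤ := fun x => (kspec x).choose with hkOf
  have kOf_spec : ∀ x : Γ, (x : SemidirectProduct _ _ φ).right
      = Multiplicative.ofAdd (t₀ * kOf x) := fun x => (kspec x).choose_spec.choose_spec.1
  have vOf_spec : ∀ x : Γ, ∃ v : Fin m → ℤ, (x : SemidirectProduct _ _ φ).left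
      = Multiplicative.ofAdd (P.mulVec (fun i => (v i : ℝ))) :=
    fun x => ⟨(kspec x).choose_spec.choose, (kspec x).choose_spec.choose_spec.2⟩
  have kuniq : ∀ (x : Γ) (k : ℤ),
      (x : SemidirectProduct _ _ φ).right = Multiplicative.ofAdd (t₀ * k) → kOf x = k := by
    intro x k hk
    have h := (kOf_spec x).symm.trans hk
    have h2 : t₀ * (kOf x : ℝ) = t₀ * (k : ℝ) := Multiplicative.ofAdd.injective h
    exact_mod_cast mul_left_cancel₀ ht₀ h2
  set f : Γ →* Multiplicative (ZMod d) :=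
    { toFun := fun x => Multiplicative.ofAdd ((kOf x : ZMod d)),
      map_one' := by
        have h1 : kOf 1 = 0 := kuniq 1 0 (by simp)
        simp [h1]
      map_mul' := by
        intro x y
        have h1 : kOf (x * y) = kOf x + kOf y := by
          refine kuniq _ _ ?_
          rw [Subgroup.coe_mul, SemidirectProduct.mul_right, kOf_spec x, kOf_spec y,
            ← ofAdd_add]
          push_cast
          ring_nf
        simp [h1, ofAdd_add] } with hf
  have hfx : ∀ x : Γ, f x = Multiplicative.ofAdd ((kOf x : ZMod d)) := fun _ => rfl
  have hker : f.ker = S.subgroupOf Γ := by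
    ext x
    simp only [MonoidHom.mem_ker, Subgroup.mem_subgroupOf, hfx]
    constructor
    · intro h
      have h0 : ((kOf x : ℤ) : ZMod d) = 0 := by
        have := Multiplicative.ofAdd.injective (h.trans (ofAdd_zero).symm)
        exact_mod_cast this
      obtain ⟨k', hk'⟩ := (ZMod.intCast_zmod_eq_zero_iff_dvd _ d).mp h0
      obtain ⟨v, hv⟩ := vOf_spec x
      refine (hS _).mpr ⟨k', v, ?_, hv⟩
      rw [kOf_spec x, hk']
      push_cast
      ring_nf
    · intro hx
      obtain ⟨k, v, hk, hv⟩ := (hS _).mp hx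
      have h1 : kOf x = d * k := by
        refine kuniq x _ ?_
        rw [hk]; push_cast; ring_nf
      rw [h1]
      have : (((d : ℤ) * k : ℤ) : ZMod d) = 0 := by push_cast; simp
      simp [this]
  have hsurj : Function.Surjective f := by
    intro a
    have hmem : (⟨Multiplicative.ofAdd (P.mulVec (fun i => (((0 : Fin m → ℤ) i : ℝ)))),
        Multiplicative.ofAdd (t₀ * ((a.toAdd.val : ℤ) : ℝ))⟩ :
        SemidirectProduct (Multiplicative (Fin m → ℝ)) (Multiplicative ℝ) φ) ∈ Γ :=
      (hΓ _).mpr ⟨(a.toAdd.val : ℤ), 0, rfl, rfl⟩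
    refine ⟨⟨_, hmem⟩, ?_⟩
    rw [hfx]
    have h1 : kOf ⟨_, hmem⟩ = (a.toAdd.val : ℤ) := kuniq _ _ rfl
    rw [h1]
    have h2 : ((a.toAdd.val : ℤ) : ZMod d) = a.toAdd := by
      push_cast
      exact ZMod.natCast_rightInverse a.toAdd
    rw [h2]
    rfl
  have hnormal : (S.subgroupOf Γ).Normal := hker ▸ f.normal_ker
  exact ⟨part1, hnormal, part3, part4, fun _ =>
    ⟨(QuotientGroup.quotientMulEquivOfEq hker.symm).trans
      (QuotientGroup.quotientKerEquivOfSurjective f hsurj)⟩⟩
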